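/- Let (T, ≤) be a countable well-founded tree and let (μ_i) be a bounded, disjointly supported sequence of positive measures on T. Assume there is a summable function μ : T → [0,∞) such that lim_i μ_i(V_t) = μ(V_t) for every t ∈ T, and assume that for every t ∈ T the limit ν(t) := lim_i μ_i(succ(t)) exists. Then for every t ∈ T whose set succ(t) of immediate successors is infinite, and for every bijective enumeration (t_j)_{j∈ℕ} of succ(t), the iterated limit lim_{j→∞} lim_{i→∞} μ_i(∪_{k≥j} (V_{t_k} ∖ {t_k})) exists and μ(t) = ν(t) + lim_{j→∞} lim_{i→∞} μ_i(∪_{k≥j} (V_{t_k} ∖ {t_k})). In particular, μ(t) = ν(t) if and only if this iterated limit is zero. -/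

import Mathlib

open Filter Topology

/-- The measure of a set `A ⊆ α` under a (summable, positive) density `μ : α → ℝ`. -/
noncomputable def msetT {α : Type*} (μ : α → ℝ) (A : Set α) : ℝ :=
  ∑' t, A.indicator μ t

/-- The set of immediate successors of `t` (elements covering `t`). -/
def succSet {α : Type*} [PartialOrder α] (t : α) : Set α := {s | t ⋖ s}

section aux
variable {α : Type*} {μ : α → ℝ}

lemma msetT_empty (μ : α → ℝ) : msetT μ (∅ : Set α) = 0 := by
  simp [msetT]

lemma msetT_singleton (μ : α → ℝ) (t : α) : msetT μ {t} = μ t := by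
  rw [msetT, tsum_eq_single t]
  · simp
  · intro b hb; simp [Set.indicator_apply, hb]

lemma msetT_union (hμ : Summable μ) {A B : Set α}
    (h : Disjoint A B) : msetT μ (A ∪ B) = msetT μ A + msetT μ B := by
  rw [msetT, Set.indicator_union_of_disjoint h, Summable.tsum_add (hμ.indicator A) (hμ.indicator B)]
  rfl

lemma msetT_hasSum (hμ : Summable μ) (A : ℕ → Set α)
    (h : Pairwise (Function.onFun Disjoint A)) :
    HasSum (fun k => msetT μ (A k)) (msetT μ (⋃ k, A k)) := by
  have hsub : HasSum (fun x : (⋃ k, A k) => μ x) (msetT μ (⋃ k, A k)) :=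
    hasSum_subtype_iff_indicator.2 (hμ.indicator _).hasSum
  have hF : HasSum (fun p : Σ k, A k => μ (p.2 : α)) (msetT μ (⋃ k, A k)) := by
    have h2 := (Equiv.ofBijective _ (Set.sigmaToiUnion_bijective A h)).hasSum_iff.2 hsub
    refine HasSum.congr_fun h2 fun p => ?_
    rcases p with ⟨k, x⟩
    rfl
  exact hF.sigma fun k => hasSum_subtype_iff_indicator.2 (hμ.indicator (A k)).hasSum

lemma msetT_biUnion_range (hμ : Summable μ) (A : ℕ → Set α)
    (h : Pairwise (Function.onFun Disjoint A)) (j : ℕ) :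
    msetT μ (⋃ k ∈ Finset.range j, A k) = ∑ k ∈ Finset.range j, msetT μ (A k) := by
  induction j with
  | zero => simp [msetT_empty]
  | succ j ih =>
    rw [Finset.range_add_one, Finset.set_biUnion_insert, Finset.sum_insert (by simp),
      msetT_union hμ, ih, add_comm]
    refine Set.disjoint_left.2 fun x hx hx' => ?_
    simp only [Set.mem_iUnion, Finset.mem_range] at hx'
    obtain ⟨k, hk, hxk⟩ := hx'
    exact Set.disjoint_left.1 (h hk.ne) hxk hx
end aux


/-- let `(T, ≤)` be a countable well-founded tree, `(μs i)` a bounded,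
disjointly supported sequence of positive measures converging weak* to `μ` and whose
successor sums converge to `ν`. Then for every `t` with infinitely many immediate
successors and every bijective enumeration `e` of `succ t`, the iterated limit
`lim_j lim_i μs i (⋃_{k ≥ j} (V_{e k} ∖ {e k}))` exists and equals `μ t − ν t`;
in particular `μ t = ν t` iff this iterated limit is zero. -/
theorem statement5 {α : Type*} [PartialOrder α] [Countable α]
    (hfin : ∀ t : α, {s | s < t}.Finite)
    (hchain : ∀ t : α, ∀ a, a < t → ∀ b, b < t → a ≤ b ∨ b ≤ a)
    (hwf : ¬ ∃ c : ℕ → α, StrictMono c)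
    (μs : ℕ → α → ℝ)
    (hnn : ∀ i t, 0 ≤ μs i t)
    (hsum : ∀ i, Summable (μs i))
    (hbdd : ∃ C : ℝ, ∀ i, msetT (μs i) Set.univ ≤ C)
    (hdisj : ∀ i j, i ≠ j →
      Disjoint (Function.support (μs i)) (Function.support (μs j)))
    (μ : α → ℝ) (hμnn : ∀ t, 0 ≤ μ t) (hμsum : Summable μ)
    (hw : ∀ t : α, Tendsto (fun i => msetT (μs i) (Set.Ici t)) atTop
      (𝓝 (msetT μ (Set.Ici t))))
    (ν : α → ℝ)
    (hν : ∀ t : α, Tendsto (fun i => msetT (μs i) (succSet t)) atTop (𝓝 (ν t)))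
    (t : α) (hinf : (succSet t).Infinite)
    (e : ℕ → α) (einj : Function.Injective e) (erange : Set.range e = succSet t) :
    ∃ g : ℕ → ℝ,
      (∀ j : ℕ, Tendsto
        (fun i => msetT (μs i) (⋃ (k : ℕ) (_ : j ≤ k), (Set.Ici (e k) \ {e k})))
        atTop (𝓝 (g j))) ∧
      ∃ L : ℝ, Tendsto g atTop (𝓝 L) ∧
        μ t = ν t + L ∧ (μ t = ν t ↔ L = 0) := by
  -- each `e k` covers `t`
  have hcov : ∀ k, t ⋖ e k := by
    intro k
    have : e k ∈ succSet t := erange ▸ Set.mem_range_self k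
    exact this
  -- the sets `Ici (e k)` are pairwise disjoint
  have hpair : Pairwise (Function.onFun Disjoint (fun k => Set.Ici (e k))) := by
    intro k k' hkk'
    refine Set.disjoint_left.2 fun x hx hx' => ?_
    have hne : e k ≠ e k' := fun h => hkk' (einj h)
    rcases eq_or_lt_of_le (hx : e k ≤ x) with h1 | h1
    · have h2 : e k' < e k := lt_of_le_of_ne (h1 ▸ hx') (Ne.symm hne)
      exact (hcov k).2 (hcov k').1 h2
    · rcases eq_or_lt_of_le (hx' : e k' ≤ x) with h2 | h2
      · exact (hcov k').2 (hcov k).1 (lt_of_le_of_ne (h2 ▸ le_of_lt h1) hne)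
      · rcases hchain x _ h1 _ h2 with h3 | h3
        · exact (hcov k').2 (hcov k).1 (lt_of_le_of_ne h3 hne)
        · exact (hcov k).2 (hcov k').1 (lt_of_le_of_ne h3 (Ne.symm hne))
  -- decomposition of `Ici t`
  have hmin : ∀ x, t < x → ∃ k, e k ≤ x := by
    intro x hx
    set S : Set α := {y | t < y ∧ y ≤ x} with hS
    have hSfin : S.Finite := by
      refine ((hfin x).insert x).subset fun y hy => ?_
      rcases eq_or_lt_of_le hy.2 with h | h
      · exact h ▸ Set.mem_insert _ _
      · exact Set.mem_insert_of_mem _ h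
    have hSne : S.Nonempty := ⟨x, hx, le_refl x⟩
    obtain ⟨m, hmS, hmmin'⟩ := hSfin.exists_minimalFor id S hSne
    have hmmin : ∀ y ∈ S, y ≤ m → m = y := fun y hy h => le_antisymm (hmmin' hy h) h
    have hchainS : ∀ y ∈ S, ∀ z ∈ S, y ≤ z ∨ z ≤ y := by
      intro y hy z hz
      rcases eq_or_lt_of_le hy.2 with h | h
      · exact Or.inr (h ▸ hz.2)
      · rcases eq_or_lt_of_le hz.2 with h' | h'
        · exact Or.inl (h' ▸ hy.2)
        · exact hchain x _ h _ h'
    have hmono : ∀ y ∈ S, m ≤ y := by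
      intro y hy
      rcases hchainS m hmS y hy with h | h
      · exact h
      · exact le_of_eq (hmmin y hy h)
    -- `m` covers `t`
    have hmc : t ⋖ m := by
      refine ⟨hmS.1, fun z hz1 hz2 => ?_⟩
      have hzS : z ∈ S := ⟨hz1, le_trans (le_of_lt hz2) hmS.2⟩
      exact absurd (hmono z hzS) (not_le_of_gt hz2)
    have : m ∈ Set.range e := erange.symm ▸ (hmc : m ∈ succSet t)
    obtain ⟨k, hk⟩ := this
    exact ⟨k, hk ▸ hmS.2⟩
  have hIci : Set.Ici t = {t} ∪ ⋃ k, Set.Ici (e k) := by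
    ext x
    simp only [Set.mem_Ici, Set.mem_union, Set.mem_singleton_iff, Set.mem_iUnion]
    constructor
    · intro hx
      rcases eq_or_lt_of_le hx with h | h
      · exact Or.inl h.symm
      · exact Or.inr (hmin x h)
    · rintro (rfl | ⟨k, hk⟩)
      · exact le_refl _
      · exact le_trans (le_of_lt (hcov k).1) hk
  -- the "strict part" sets
  set D : ℕ → Set α := fun k => Set.Ici (e k) \ {e k} with hD
  have hDpair : Pairwise (Function.onFun Disjoint D) :=
    fun k k' h => (hpair h).mono Set.diff_subset Set.diff_subset
  have hDlt : ∀ k x, x ∈ D k → e k < x := fun k x hx =>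
    lt_of_le_of_ne hx.1 (Ne.symm hx.2)
  have hIcik : ∀ k, Set.Ici (e k) = {e k} ∪ D k := by
    intro k
    ext x
    simp only [Set.mem_Ici, Set.mem_union, Set.mem_singleton_iff, hD, Set.mem_diff,
      Set.mem_Ici]
    constructor
    · intro hx
      rcases eq_or_lt_of_le hx with h | h
      · exact Or.inl h.symm
      · exact Or.inr ⟨hx, fun h' => (h' ▸ h).false⟩
    · rintro (rfl | ⟨h, _⟩)
      · exact le_refl _
      · exact h
  have hUnion : (⋃ k, Set.Ici (e k)) = succSet t ∪ ⋃ k, D k := by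
    have : (⋃ k, Set.Ici (e k)) = ⋃ k, ({e k} ∪ D k) := by
      exact Set.iUnion_congr hIcik
    rw [this, Set.iUnion_union_distrib]
    congr 1
    rw [← erange]
    ext x
    simp [Set.mem_range, eq_comm]
  -- singleton disjointness
  have htnot : ∀ x, x ∈ succSet t ∪ ⋃ k, D k → t < x := by
    rintro x (hx | hx)
    · exact hx.1
    · obtain ⟨k, hk⟩ := Set.mem_iUnion.1 hx
      exact lt_trans (hcov k).1 (hDlt k x hk)
  have hdisj1 : Disjoint ({t} : Set α) (succSet t ∪ ⋃ k, D k) :=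
    Set.disjoint_left.2 fun x hx hx' => absurd (htnot x hx') (by
      rw [Set.mem_singleton_iff] at hx; exact hx ▸ lt_irrefl t)
  have hdisj2 : Disjoint (succSet t) (⋃ k, D k) := by
    refine Set.disjoint_left.2 fun x hx hx' => ?_
    obtain ⟨k, hk⟩ := Set.mem_iUnion.1 hx'
    exact (hx : t ⋖ x).2 (hcov k).1 (hDlt k x hk)
  have hdisjk : ∀ k, Disjoint ({e k} : Set α) (D k) :=
    fun k => Set.disjoint_left.2 fun x hx hx' => hx'.2 (Set.mem_singleton_iff.1 hx)
  have hdisj1' : Disjoint ({t} : Set α) (⋃ k, Set.Ici (e k)) := by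
    rw [hUnion]; exact hdisj1
  -- decomposition identity for any summable density
  have key : ∀ (lam : α → ℝ), Summable lam → ∀ j : ℕ,
      msetT lam (⋃ (k : ℕ) (_ : j ≤ k), D k) =
        msetT lam (Set.Ici t) - lam t - msetT lam (succSet t)
          - ∑ k ∈ Finset.range j, (msetT lam (Set.Ici (e k)) - lam (e k)) := by
    intro lam hlam j
    have h1 : msetT lam (Set.Ici t) =
        lam t + (msetT lam (succSet t) + msetT lam (⋃ k, D k)) := by
      rw [hIci, msetT_union hlam hdisj1', hUnion, msetT_union hlam hdisj2, msetT_singleton]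
    have hsplitU : (⋃ k, D k) = (⋃ k ∈ Finset.range j, D k) ∪ ⋃ (k) (_ : j ≤ k), D k := by
      ext x
      simp only [Set.mem_iUnion, Set.mem_union, Finset.mem_range]
      constructor
      · rintro ⟨k, hk⟩
        rcases lt_or_ge k j with h | h
        · exact Or.inl ⟨k, h, hk⟩
        · exact Or.inr ⟨k, h, hk⟩
      · rintro (⟨k, _, hk⟩ | ⟨k, _, hk⟩) <;> exact ⟨k, hk⟩
    have hdisjJ : Disjoint (⋃ k ∈ Finset.range j, D k) (⋃ (k) (_ : j ≤ k), D k) := by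
      refine Set.disjoint_left.2 fun x hx hx' => ?_
      simp only [Set.mem_iUnion, Finset.mem_range] at hx hx'
      obtain ⟨k, hk, hxk⟩ := hx
      obtain ⟨k', hk', hxk'⟩ := hx'
      exact Set.disjoint_left.1 (hDpair (by omega : k ≠ k')) hxk hxk'
    have h2 : msetT lam (⋃ k, D k) =
        (∑ k ∈ Finset.range j, msetT lam (D k)) + msetT lam (⋃ (k) (_ : j ≤ k), D k) := by
      rw [hsplitU, msetT_union hlam hdisjJ, msetT_biUnion_range hlam D hDpair]
    have h3 : ∀ k, msetT lam (D k) = msetT lam (Set.Ici (e k)) - lam (e k) := by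
      intro k
      rw [hIcik k, msetT_union hlam (hdisjk k), msetT_singleton]
      ring
    have h4 : (∑ k ∈ Finset.range j, msetT lam (D k)) =
        ∑ k ∈ Finset.range j, (msetT lam (Set.Ici (e k)) - lam (e k)) :=
      Finset.sum_congr rfl fun k _ => h3 k
    rw [h4] at h2
    linarith [h1, h2]
  -- pointwise vanishing from disjoint supports
  have hzero : ∀ x : α, Tendsto (fun i => μs i x) atTop (𝓝 0) := by
    intro x
    by_cases hx : ∃ i0, μs i0 x ≠ 0
    · obtain ⟨i0, hi0⟩ := hx
      refine Tendsto.congr' ?_ tendsto_const_nhds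
      filter_upwards [eventually_gt_atTop i0] with i hi
      by_contra h
      exact Set.disjoint_left.1 (hdisj i i0 hi.ne') (fun hc => h hc.symm) hi0
    · push_neg at hx
      refine Tendsto.congr' ?_ tendsto_const_nhds
      filter_upwards with i using (hx i).symm
  -- the limits
  refine ⟨fun j => msetT μ (Set.Ici t) - ν t
      - ∑ k ∈ Finset.range j, msetT μ (Set.Ici (e k)), ?_, ?_⟩
  · intro j
    have heq : (fun i => msetT (μs i) (⋃ (k : ℕ) (_ : j ≤ k), (Set.Ici (e k) \ {e k}))) =
        fun i => msetT (μs i) (Set.Ici t) - μs i t - msetT (μs i) (succSet t)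
          - ∑ k ∈ Finset.range j, (msetT (μs i) (Set.Ici (e k)) - μs i (e k)) := by
      funext i
      exact key (μs i) (hsum i) j
    rw [heq]
    have htend : Tendsto
        (fun i => msetT (μs i) (Set.Ici t) - μs i t - msetT (μs i) (succSet t)
          - ∑ k ∈ Finset.range j, (msetT (μs i) (Set.Ici (e k)) - μs i (e k))) atTop
        (𝓝 (msetT μ (Set.Ici t) - 0 - ν t
          - ∑ k ∈ Finset.range j, (msetT μ (Set.Ici (e k)) - 0))) := by
      exact (((hw t).sub (hzero t)).sub (hν t)).sub
        (tendsto_finset_sum _ fun k _ => (hw (e k)).sub (hzero (e k)))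
    simpa using htend
  · -- limit over j
    have hS := msetT_hasSum hμsum (fun k => Set.Ici (e k)) hpair
    have hμIci : msetT μ (Set.Ici t) = μ t + msetT μ (⋃ k, Set.Ici (e k)) := by
      rw [hIci, msetT_union hμsum hdisj1', msetT_singleton]
    refine ⟨μ t - ν t, ?_, by ring, ?_⟩
    · have := tendsto_const_nhds.sub hS.tendsto_sum_nat
        (f := fun _ : ℕ => msetT μ (Set.Ici t) - ν t)
      have h5 : msetT μ (Set.Ici t) - ν t - msetT μ (⋃ k, Set.Ici (e k)) = μ t - ν t := by
        rw [hμIci]; ring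
      rw [h5] at this
      exact this
    · constructor
      · intro h; linarith
      · intro h; linarith
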